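/- Let X be a locally compact subset of the positive cone [0,∞)^N of ℝ^N, equipped with a positive Borel measure μ, and let E be a vector sublattice of the real-valued functions on X containing the restrictions to X of the reduced family of test functions 1, −pr_1, …, −pr_N and Σ_{k=1}^N pr_k². Let (T_n) be a sequence of weakly nonlinear (sublinear and translatable) and monotone operators from E into E such that for each of these N+2 test functions h one has T_n(h)(x) → h(x) for μ-almost every x ∈ X. Then for every f ∈ E that is bounded and whose set of points of discontinuity is μ-null, one has T_n(f)(x) → f(x) for μ-almost every x ∈ X. -/

import Mathlib

open MeasureTheory Filter Topology Set

/-- **Theorem `thm_a.e.Conv`, last assertion.** Korovkin-type theorem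
for a.e. convergence with the reduced family of test functions
`1, -pr_1, …, -pr_N, Σ pr_k²`, for `X` a locally compact subset of the positive cone
of `ℝ^N`: weakly nonlinear (sublinear and translatable) monotone operators from `E`
into `E`; conclusion for every bounded a.e.-continuous member of `E`. -/
theorem korovkin_ae_positiveCone {N : ℕ} (X : Set (Fin N → ℝ)) [LocallyCompactSpace X]
    (hXpos : ∀ x ∈ X, ∀ k, 0 ≤ x k)
    (μ : Measure X)
    (E : Set (X → ℝ))
    -- `E` is a vector sublattice of `𝓕(X)`
    (hEadd : ∀ f ∈ E, ∀ g ∈ E, f + g ∈ E)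
    (hEsmul : ∀ (c : ℝ), ∀ f ∈ E, c • f ∈ E)
    (hEsup : ∀ f ∈ E, ∀ g ∈ E, f ⊔ g ∈ E)
    -- `E` contains the test functions
    (hone : (fun _ : X => (1 : ℝ)) ∈ E)
    (hprneg : ∀ k : Fin N, (fun x : X => -((x : Fin N → ℝ) k)) ∈ E)
    (hsq : (fun x : X => ∑ k, ((x : Fin N → ℝ) k) ^ 2) ∈ E)
    -- `(T n)` is a sequence of sublinear and monotone operators from `E` into `E`
    (T : ℕ → (X → ℝ) → (X → ℝ))
    (hmap : ∀ n, ∀ f ∈ E, T n f ∈ E)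
    (hsubadd : ∀ n, ∀ f ∈ E, ∀ g ∈ E, T n (f + g) ≤ T n f + T n g)
    (hhom : ∀ n, ∀ (α : ℝ), 0 ≤ α → ∀ f ∈ E, T n (α • f) = α • T n f)
    (hmono : ∀ n, ∀ f ∈ E, ∀ g ∈ E, f ≤ g → T n f ≤ T n g)
    (htrans : ∀ n, ∀ f ∈ E, ∀ (α : ℝ), 0 ≤ α →
      T n (f + α • (fun _ : X => (1 : ℝ))) = T n f + α • T n (fun _ : X => (1 : ℝ)))
    -- a.e. convergence on the test functions
    (htest1 : ∀ᵐ x ∂μ, Tendsto (fun n => T n (fun _ => 1) x) atTop (𝓝 1))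
    (htestprneg : ∀ k : Fin N, ∀ᵐ x ∂μ,
      Tendsto (fun n => T n (fun y : X => -((y : Fin N → ℝ) k)) x) atTop
        (𝓝 (-((x : Fin N → ℝ) k))))
    (htestsq : ∀ᵐ x ∂μ,
      Tendsto (fun n => T n (fun y : X => ∑ k, ((y : Fin N → ℝ) k) ^ 2) x) atTop
        (𝓝 (∑ k, ((x : Fin N → ℝ) k) ^ 2)))
    -- conclusion, for every bounded a.e. continuous `f ∈ E`
    (f : X → ℝ) (hfE : f ∈ E)
    (hfb : ∃ M : ℝ, ∀ x, |f x| ≤ M)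
    (hfc : μ {x | ¬ ContinuousAt f x} = 0) :
    ∀ᵐ x ∂μ, Tendsto (fun n => T n f x) atTop (𝓝 (f x)) := by
  classical
  -- evaluation helper for the pointwise order on functions
  have ev : ∀ {u v : X → ℝ}, u ≤ v → ∀ y : X, u y ≤ v y := fun h y => h y
  set one : X → ℝ := fun _ => (1 : ℝ) with hone_def
  set sqf : X → ℝ := fun y : X => ∑ k, ((y : Fin N → ℝ) k) ^ 2 with hsqf_def
  have hnpr : ∀ k : Fin N, (fun y : X => -((y : Fin N → ℝ) k)) ∈ E := hprneg
  have hE0 : (0 : X → ℝ) ∈ E := by simpa using hEsmul 0 one hone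
  have hT0 : ∀ n, T n (0 : X → ℝ) = 0 := by
    intro n
    have := hhom n 0 le_rfl one hone
    simpa using this
  have hTconst : ∀ n (a : ℝ), T n (a • one) = a • T n one := by
    intro n a
    rcases le_or_gt 0 a with h | h
    · exact hhom n a h one hone
    · have h2 := htrans n (a • one) (hEsmul a one hone) (-a) (by linarith)
      have h3 : a • one + (-a) • one = (0 : X → ℝ) := by
        funext y; simp [hone_def]
      rw [h3, hT0 n] at h2
      have h4 := eq_neg_of_add_eq_zero_left h2.symm
      rw [h4]; simp [neg_smul]
  have hEsum : ∀ (s : Finset (Fin N)) (G : Fin N → X → ℝ), (∀ k, G k ∈ E) →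
      (∑ k ∈ s, G k) ∈ E := by
    intro s G hG
    exact Finset.sum_induction G (· ∈ E) (fun a b ha hb => hEadd a ha b hb) hE0
      (fun k _ => hG k)
  have hTsumLe : ∀ n (s : Finset (Fin N)) (G : Fin N → X → ℝ), (∀ k, G k ∈ E) →
      T n (∑ k ∈ s, G k) ≤ ∑ k ∈ s, T n (G k) := by
    intro n s G hG
    induction s using Finset.induction_on with
    | empty => simp [hT0 n]
    | @insert a s ha ih =>
        rw [Finset.sum_insert ha, Finset.sum_insert ha]
        exact le_trans (hsubadd n (G a) (hG a) _ (hEsum s G hG)) (add_le_add le_rfl ih)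
  have hprAll : ∀ᵐ x ∂μ, ∀ k : Fin N,
      Tendsto (fun n => T n (fun y : X => -((y : Fin N → ℝ) k)) x) atTop
        (𝓝 (-((x : Fin N → ℝ) k))) := ae_all_iff.mpr htestprneg
  have hcont : ∀ᵐ x ∂μ, ContinuousAt f x := ae_iff.mpr hfc
  obtain ⟨M0, hM0⟩ := hfb
  filter_upwards [htest1, hprAll, htestsq, hcont] with x h1 hk hs hcx
  have hM0nn : 0 ≤ M0 := le_trans (abs_nonneg _) (hM0 x)
  rw [Metric.tendsto_atTop]
  intro ε hε
  obtain ⟨δ, hδpos, hδ⟩ := Metric.continuousAt_iff.mp hcx (ε / 2) (by linarith)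
  set xv : Fin N → ℝ := (x : Fin N → ℝ) with hxv_def
  set lam : ℝ := 2 * M0 / δ ^ 2 with hlam_def
  have hlam : 0 ≤ lam := by positivity
  set S : ℝ := ∑ k, xv k ^ 2 with hS_def
  have hxvnn : ∀ k, 0 ≤ xv k := fun k => hXpos (↑x) x.2 k
  have hSnn : 0 ≤ S := Finset.sum_nonneg fun k _ => sq_nonneg _
  set p3 : X → ℝ := ∑ k, (2 * lam * xv k) • (fun y : X => -((y : Fin N → ℝ) k)) with hp3_def
  set g : X → ℝ := (ε / 2) • one + lam • sqf + p3 + (lam * S) • one with hg_def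
  have hp3E : p3 ∈ E := by
    rw [hp3_def]
    exact hEsum Finset.univ _ (fun k => hEsmul _ _ (hnpr k))
  have h12E : (ε / 2) • one + lam • sqf ∈ E :=
    hEadd _ (hEsmul _ one hone) _ (hEsmul _ sqf hsq)
  have h123E : (ε / 2) • one + lam • sqf + p3 ∈ E := hEadd _ h12E _ hp3E
  have hgE : g ∈ E := by
    rw [hg_def]; exact hEadd _ h123E _ (hEsmul _ one hone)
  have hgval : ∀ y : X, g y = ε / 2 + lam * ∑ k, ((y : Fin N → ℝ) k - xv k) ^ 2 := by
    intro y
    have e0 : g y = ε / 2 + lam * (∑ k, ((y : Fin N → ℝ) k) ^ 2)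
        + (∑ k, (2 * lam * xv k) * (-((y : Fin N → ℝ) k))) + lam * S := by
      rw [hg_def, hp3_def]
      simp [Finset.sum_apply, smul_eq_mul, hone_def, hsqf_def]
    rw [e0]
    have e1 : lam * ∑ k, ((y : Fin N → ℝ) k - xv k) ^ 2
        = ∑ k, (lam * ((y : Fin N → ℝ) k) ^ 2 + (2 * lam * xv k) * (-((y : Fin N → ℝ) k))
            + lam * xv k ^ 2) := by
      rw [Finset.mul_sum]
      exact Finset.sum_congr rfl fun k _ => by ring
    have e2 : ∑ k, (lam * ((y : Fin N → ℝ) k) ^ 2 + (2 * lam * xv k) * (-((y : Fin N → ℝ) k))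
            + lam * xv k ^ 2)
        = (∑ k, lam * ((y : Fin N → ℝ) k) ^ 2)
          + (∑ k, (2 * lam * xv k) * (-((y : Fin N → ℝ) k)))
          + (∑ k, lam * xv k ^ 2) := by
      rw [Finset.sum_add_distrib, Finset.sum_add_distrib]
    have e3 : (∑ k, lam * ((y : Fin N → ℝ) k) ^ 2) = lam * ∑ k, ((y : Fin N → ℝ) k) ^ 2 :=
      (Finset.mul_sum _ _ _).symm
    have e4 : (∑ k, lam * xv k ^ 2) = lam * S := by
      rw [hS_def]; exact (Finset.mul_sum _ _ _).symm
    rw [e1, e2, e3, e4]; ring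
  have hgabs : ∀ y : X, |f y - f x| ≤ g y := by
    intro y
    rw [hgval y]
    have hsumnn : 0 ≤ ∑ k, ((y : Fin N → ℝ) k - xv k) ^ 2 :=
      Finset.sum_nonneg fun k _ => sq_nonneg _
    by_cases hy : dist y x < δ
    · have h2 : |f y - f x| < ε / 2 := by
        have := hδ hy
        rwa [Real.dist_eq] at this
      nlinarith [mul_nonneg hlam hsumnn]
    · push_neg at hy
      obtain ⟨k, hkk⟩ : ∃ k, δ ≤ |(y : Fin N → ℝ) k - xv k| := by
        by_contra hcon
        push_neg at hcon
        have : dist y x < δ := by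
          rw [Subtype.dist_eq, dist_pi_lt_iff hδpos]
          intro i
          rw [Real.dist_eq]
          exact hcon i
        linarith
      have hb1 : δ ^ 2 ≤ ((y : Fin N → ℝ) k - xv k) ^ 2 := by
        calc δ ^ 2 ≤ |(y : Fin N → ℝ) k - xv k| ^ 2 := by
              exact pow_le_pow_left₀ hδpos.le hkk 2
          _ = ((y : Fin N → ℝ) k - xv k) ^ 2 := sq_abs _
      have hb2 : ((y : Fin N → ℝ) k - xv k) ^ 2 ≤ ∑ j, ((y : Fin N → ℝ) j - xv j) ^ 2 :=
        Finset.single_le_sum (f := fun j => ((y : Fin N → ℝ) j - xv j) ^ 2)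
          (fun i _ => sq_nonneg _) (Finset.mem_univ k)
      have hb3 : |f y - f x| ≤ 2 * M0 :=
        calc |f y - f x| ≤ |f y| + |f x| := abs_sub _ _
          _ ≤ M0 + M0 := add_le_add (hM0 y) (hM0 x)
          _ = 2 * M0 := by ring
      have hb4 : 2 * M0 = lam * δ ^ 2 := by
        rw [hlam_def]; field_simp
      have hb5 : lam * δ ^ 2 ≤ lam * ∑ j, ((y : Fin N → ℝ) j - xv j) ^ 2 :=
        mul_le_mul_of_nonneg_left (le_trans hb1 hb2) hlam
      linarith
  have hgnn : (0 : X → ℝ) ≤ g := fun y => le_trans (abs_nonneg _) (hgabs y)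
  have hTgnn : ∀ n, 0 ≤ T n g x := by
    intro n
    have := ev (hmono n 0 hE0 g hgE hgnn) x
    rw [hT0 n] at this
    simpa using this
  have hTg_ub : ∀ n, T n g x ≤ (ε / 2) * T n one x + lam * T n sqf x
      + (∑ k, (2 * lam * xv k) * T n (fun y : X => -((y : Fin N → ℝ) k)) x)
      + (lam * S) * T n one x := by
    intro n
    have a1 := ev (hsubadd n _ h123E _ (hEsmul (lam * S) one hone)) x
    have a2 := ev (hsubadd n _ h12E _ hp3E) x
    have a3 := ev (hsubadd n _ (hEsmul (ε / 2) one hone) _ (hEsmul lam sqf hsq)) x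
    have b1 := congrFun (hhom n (ε / 2) (by linarith) one hone) x
    have b2 := congrFun (hhom n lam hlam sqf hsq) x
    have b4 := congrFun (hhom n (lam * S) (mul_nonneg hlam hSnn) one hone) x
    have b3x : T n p3 x ≤ ∑ k, (2 * lam * xv k) * T n (fun y : X => -((y : Fin N → ℝ) k)) x := by
      have hb := ev (hTsumLe n Finset.univ
        (fun k => (2 * lam * xv k) • (fun y : X => -((y : Fin N → ℝ) k)))
        (fun k => hEsmul _ _ (hnpr k))) x
      rw [Finset.sum_apply] at hb
      rw [hp3_def]
      refine le_trans hb (le_of_eq (Finset.sum_congr rfl fun k _ => ?_))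
      have := congrFun (hhom n (2 * lam * xv k)
        (mul_nonneg (by positivity) (hxvnn k)) _ (hnpr k)) x
      simpa [smul_eq_mul] using this
    simp only [Pi.add_apply, Pi.smul_apply, smul_eq_mul] at a1 a2 a3 b1 b2 b4
    rw [hg_def]
    linarith
  have hkey : ∀ n, |T n f x - f x| ≤ |f x| * |T n one x - 1| + T n g x := by
    intro n
    have hfmem : f + (-(f x)) • one ∈ E := hEadd f hfE _ (hEsmul _ one hone)
    have hup1 := ev (hsubadd n (f + (-(f x)) • one) hfmem ((f x) • one)
      (hEsmul _ one hone)) x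
    have hfeq : (f + (-(f x)) • one) + (f x) • one = f := by
      funext y; simp [hone_def]
    rw [hfeq] at hup1
    have hle1 : f + (-(f x)) • one ≤ g := by
      intro y
      have h1' := hgabs y
      have h2' := le_abs_self (f y - f x)
      simp only [Pi.add_apply, Pi.smul_apply, smul_eq_mul, hone_def]
      linarith
    have hup2 := ev (hmono n _ hfmem g hgE hle1) x
    have hcon := congrFun (hTconst n (f x)) x
    have hlmem : (f x) • one + (-1 : ℝ) • f ∈ E :=
      hEadd _ (hEsmul _ one hone) _ (hEsmul (-1) f hfE)
    have hlo1 := ev (hsubadd n f hfE ((f x) • one + (-1 : ℝ) • f) hlmem) x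
    have hleq : f + ((f x) • one + (-1 : ℝ) • f) = (f x) • one := by
      funext y; simp [hone_def]
    rw [hleq] at hlo1
    have hle2 : (f x) • one + (-1 : ℝ) • f ≤ g := by
      intro y
      have h1' := hgabs y
      have h2' := neg_abs_le (f y - f x)
      simp only [Pi.add_apply, Pi.smul_apply, smul_eq_mul, hone_def]
      linarith
    have hlo2 := ev (hmono n _ hlmem g hgE hle2) x
    simp only [Pi.add_apply, Pi.smul_apply, smul_eq_mul] at hup1 hlo1 hcon hup2 hlo2
    have habs1 := le_abs_self (f x * (T n one x - 1))
    have habs2 := neg_abs_le (f x * (T n one x - 1))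
    have habs3 : |f x * (T n one x - 1)| = |f x| * |T n one x - 1| := abs_mul _ _
    have hexp : f x * (T n one x - 1) = f x * T n one x - f x := by ring
    rw [abs_sub_le_iff]
    constructor <;> linarith
  have hUlim : Tendsto (fun n => (ε / 2) * T n one x + lam * T n sqf x
      + (∑ k, (2 * lam * xv k) * T n (fun y : X => -((y : Fin N → ℝ) k)) x)
      + (lam * S) * T n one x) atTop (𝓝 (ε / 2)) := by
    have t1 : Tendsto (fun n => (ε / 2) * T n one x) atTop (𝓝 ((ε / 2) * 1)) :=
      h1.const_mul _
    have t2 : Tendsto (fun n => lam * T n sqf x) atTop (𝓝 (lam * S)) :=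
      hs.const_mul _
    have t3 : Tendsto (fun n => ∑ k, (2 * lam * xv k) *
          T n (fun y : X => -((y : Fin N → ℝ) k)) x) atTop
        (𝓝 (∑ k, (2 * lam * xv k) * (-(xv k)))) :=
      tendsto_finset_sum _ fun k _ => (hk k).const_mul _
    have t4 : Tendsto (fun n => (lam * S) * T n one x) atTop (𝓝 ((lam * S) * 1)) :=
      h1.const_mul _
    have tall := ((t1.add t2).add t3).add t4
    have hL : (ε / 2) * 1 + lam * S + (∑ k, (2 * lam * xv k) * (-(xv k))) + (lam * S) * 1
        = ε / 2 := by
      have hsum : ∑ k, (2 * lam * xv k) * (-(xv k)) = -(2 * lam) * S := by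
        rw [hS_def, Finset.mul_sum]
        exact Finset.sum_congr rfl fun k _ => by ring
      rw [hsum]; ring
    rwa [hL] at tall
  have hfinal : ∀ n, |T n f x - f x| ≤ |f x| * |T n one x - 1|
      + ((ε / 2) * T n one x + lam * T n sqf x
        + (∑ k, (2 * lam * xv k) * T n (fun y : X => -((y : Fin N → ℝ) k)) x)
        + (lam * S) * T n one x) := by
    intro n
    have := hTg_ub n
    have := hkey n
    linarith
  have hVlim : Tendsto (fun n => |f x| * |T n one x - 1|
      + ((ε / 2) * T n one x + lam * T n sqf x
        + (∑ k, (2 * lam * xv k) * T n (fun y : X => -((y : Fin N → ℝ) k)) x)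
        + (lam * S) * T n one x)) atTop (𝓝 (|f x| * |(1 : ℝ) - 1| + ε / 2)) :=
    (((h1.sub tendsto_const_nhds).abs).const_mul _).add hUlim
  have hVlim' : Tendsto (fun n => |f x| * |T n one x - 1|
      + ((ε / 2) * T n one x + lam * T n sqf x
        + (∑ k, (2 * lam * xv k) * T n (fun y : X => -((y : Fin N → ℝ) k)) x)
        + (lam * S) * T n one x)) atTop (𝓝 (ε / 2)) := by
    simpa using hVlim
  have hev := hVlim' (Iio_mem_nhds (show ε / 2 < ε by linarith))
  obtain ⟨N0, hN0⟩ := mem_atTop_sets.mp hev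
  refine ⟨N0, fun n hn => ?_⟩
  rw [Real.dist_eq]
  exact lt_of_le_of_lt (hfinal n) (hN0 n hn)
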